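/- Let A be an Artin algebra and let 0 → X → P → M → 0 be a short exact sequence of finitely generated left A-modules in which the map X → P is a left add(A)-approximation of X. Then X is reflexive if and only if M is torsionless. -/
import Mathlib


universe u

section Dual
variable (R : Type u) [Ring R] (M : Type u) [AddCommGroup M] [Module R M]

/-- The canonical evaluation map `φ_M : M → M** = Hom_{R^op}(Hom_R(M, R), R)`,
sending `m` to `f ↦ f m`. -/
noncomputable def evalDD : M →ₗ[R] ((M →ₗ[R] R) →ₗ[Rᵐᵒᵖ] R) where
  toFun m :=
    { toFun := fun f => f m
      map_add' := fun f g => rfl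
      map_smul' := fun a f => rfl }
  map_add' m m' := by ext f; simp
  map_smul' a m := by ext f; simp

/-- `M` is torsionless if the canonical map `φ_M : M → M**` is injective. -/
def IsTorsionless : Prop := Function.Injective (evalDD R M)

/-- `M` is reflexive if the canonical map `φ_M : M → M**` is bijective. -/
def IsReflexiveModule : Prop := Function.Bijective (evalDD R M)
end Dual

section Approx
variable (R : Type u) [Ring R] (M : Type u) [AddCommGroup M] [Module R M]
variable (P : Type u) [AddCommGroup P] [Module R P]

/-- `f : M → P` is a left `add R`-approximation: `P` is a finitely generated projective
module (i.e. `P ∈ add R`), and every homomorphism from `M` to a finitely generated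
projective module factors through `f`. -/
def IsLeftAddApprox (f : M →ₗ[R] P) : Prop :=
  Module.Finite R P ∧ Module.Projective R P ∧
  ∀ (Q : Type u) (_ : AddCommGroup Q) (_ : Module R Q), Module.Finite R Q →
    Module.Projective R Q → ∀ g : M →ₗ[R] Q, ∃ h : P →ₗ[R] Q, h.comp f = g
end Approx

section Aux

variable {R : Type u} [Ring R]

/-- Factorization of a linear map through a surjection it kills the kernel of. -/
theorem factor_through_surjective {M N Q : Type u} [AddCommGroup M] [Module R M]
    [AddCommGroup N] [Module R N] [AddCommGroup Q] [Module R Q]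
    (g : M →ₗ[R] N) (hg : Function.Surjective g) (p : M →ₗ[R] Q)
    (h : ∀ x, g x = 0 → p x = 0) : ∃ q : N →ₗ[R] Q, q.comp g = p := by
  have hle : LinearMap.ker g ≤ LinearMap.ker p := fun x hx => h x hx
  let e := g.quotKerEquivOfSurjective hg
  refine ⟨(Submodule.liftQ (LinearMap.ker g) p hle).comp e.symm.toLinearMap, ?_⟩
  ext x
  have h1 : e (Submodule.Quotient.mk x) = g x := by
    simp [e, LinearMap.quotKerEquivOfSurjective]
  have h2 : e.symm (g x) = Submodule.Quotient.mk x := by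
    rw [← h1, LinearEquiv.symm_apply_apply]
  simp [h2]

/-- The dual map (over the opposite ring) of a linear map. -/
noncomputable def dmap {M N : Type u} [AddCommGroup M] [Module R M]
    [AddCommGroup N] [Module R N] (u : M →ₗ[R] N) :
    (N →ₗ[R] R) →ₗ[Rᵐᵒᵖ] (M →ₗ[R] R) where
  toFun ff := ff.comp u
  map_add' ff gg := by ext x; simp
  map_smul' s ff := by ext x; simp

@[simp] theorem dmap_apply {M N : Type u} [AddCommGroup M] [Module R M]
    [AddCommGroup N] [Module R N] (u : M →ₗ[R] N) (ff : N →ₗ[R] R) :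
    dmap u ff = ff.comp u := rfl

@[simp] theorem evalDD_apply (M : Type u) [AddCommGroup M] [Module R M]
    (m : M) (ff : M →ₗ[R] R) : evalDD R M m ff = ff m := rfl

/-- The evaluation map is bijective for finite free modules `Fin n → R`. -/
theorem evalDD_bijective_pi (n : ℕ) :
    Function.Bijective (evalDD R (Fin n → R)) := by
  constructor
  · intro v w h
    funext i
    have := congrArg (fun η => η (LinearMap.proj i : (Fin n → R) →ₗ[R] R)) h
    simpa using this
  · intro η
    refine ⟨fun i => η (LinearMap.proj i), ?_⟩
    ext ff
    have hrepr : ff = ∑ i : Fin n,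
        MulOpposite.op (ff (Pi.single i 1)) • (LinearMap.proj i : (Fin n → R) →ₗ[R] R) := by
      refine LinearMap.ext fun v => ?_
      have hv : v = ∑ i : Fin n, Pi.single i (v i) := (Finset.univ_sum_single v).symm
      have : ff v = ∑ i : Fin n, ff (Pi.single i (v i)) := by
        conv_lhs => rw [hv]
        rw [map_sum]
      rw [this]
      simp only [LinearMap.sum_apply, LinearMap.smul_apply, LinearMap.proj_apply]
      refine Finset.sum_congr rfl fun i _ => ?_
      have : (Pi.single i (v i) : Fin n → R) = v i • (Pi.single i (1 : R) : Fin n → R) := by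
        funext j
        by_cases hj : j = i <;> simp [hj, Pi.single_apply]
      rw [this, map_smul]
      simp [MulOpposite.smul_eq_mul_unop]
    calc (evalDD R (Fin n → R) fun i => η (LinearMap.proj i)) ff
        = ff (fun i => η (LinearMap.proj i)) := rfl
      _ = η ff := by
          conv_lhs => rw [hrepr]
          conv_rhs => rw [hrepr]
          simp only [LinearMap.sum_apply, LinearMap.smul_apply, LinearMap.proj_apply, map_sum,
            map_smul]

/-- The evaluation map is bijective for finitely generated projective modules. -/
theorem evalDD_bijective_of_projective (P : Type u) [AddCommGroup P] [Module R P]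
    [Module.Finite R P] [Module.Projective R P] :
    Function.Bijective (evalDD R P) := by
  obtain ⟨n, π, hπ⟩ := Module.Finite.exists_fin' R P
  obtain ⟨σ, hσ⟩ := Module.projective_lifting_property π LinearMap.id hπ
  have hσπ : ∀ p : P, π (σ p) = p := fun p => congrArg (fun u => u p) hσ
  constructor
  · intro p q h
    have hfs : evalDD R (Fin n → R) (σ p) = evalDD R (Fin n → R) (σ q) := by
      ext hh
      have := congrArg (fun η => η (hh.comp σ)) h
      simpa using this
    have := (evalDD_bijective_pi n).1 hfs
    rw [← hσπ p, ← hσπ q, this]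
  · intro η
    obtain ⟨v, hv⟩ := (evalDD_bijective_pi n).2 (η.comp (dmap σ))
    refine ⟨π v, ?_⟩
    ext ff
    have h1 : evalDD R (Fin n → R) v (ff.comp π) = η ((ff.comp π).comp σ) := by
      rw [hv]; rfl
    have h2 : (ff.comp π).comp σ = ff := by
      ext p; simp [hσπ]
    calc evalDD R P (π v) ff = ff (π v) := rfl
      _ = (ff.comp π) v := rfl
      _ = evalDD R (Fin n → R) v (ff.comp π) := rfl
      _ = η ff := by rw [h1, h2]

end Aux

/-- Let `A` be an Artin algebra and `0 → X → P → M → 0` a short exact sequence of finitely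
generated left `A`-modules in which `X → P` is a left `add A`-approximation of `X`.
Then `X` is reflexive if and only if `M` is torsionless. -/
theorem stmt1 (R₀ : Type u) [CommRing R₀] [IsArtinianRing R₀] (A : Type u) [Ring A]
    [Algebra R₀ A] [Module.Finite R₀ A]
    (X : Type u) [AddCommGroup X] [Module A X] [Module.Finite A X]
    (P : Type u) [AddCommGroup P] [Module A P] [Module.Finite A P]
    (M : Type u) [AddCommGroup M] [Module A M] [Module.Finite A M]
    (f : X →ₗ[A] P) (g : P →ₗ[A] M)
    (hf : Function.Injective f) (hg : Function.Surjective g)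
    (hexact : LinearMap.range f = LinearMap.ker g)
    (happrox : IsLeftAddApprox A X P f) :
    IsReflexiveModule A X ↔ IsTorsionless A M := by
  obtain ⟨hPfin, hPproj, happ⟩ := happrox
  haveI := hPfin; haveI := hPproj
  have hP : Function.Bijective (evalDD A P) := evalDD_bijective_of_projective P
  -- every functional on X extends along f
  have fstar_surj : ∀ ξ : X →ₗ[A] A, ∃ p' : P →ₗ[A] A, p'.comp f = ξ := fun ξ =>
    happ A inferInstance inferInstance inferInstance inferInstance ξ
  have hgf : ∀ x : X, g (f x) = 0 := by
    intro x
    have : f x ∈ LinearMap.ker g := hexact ▸ LinearMap.mem_range_self f x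
    exact this
  constructor
  · -- X reflexive → M torsionless
    intro hX
    rw [IsTorsionless, injective_iff_map_eq_zero]
    intro m hm
    have hm' : ∀ m' : M →ₗ[A] A, m' m = 0 := fun m' => congrArg (fun η => η m') hm
    obtain ⟨p, rfl⟩ := hg m
    set η := evalDD A P p with hη
    -- η kills the kernel of dmap f
    have hker : ∀ p' : P →ₗ[A] A, dmap f p' = 0 → η p' = 0 := by
      intro p' hp'
      have hp'f : ∀ x : X, p' (f x) = 0 := fun x => congrArg (fun u => u x) hp'
      obtain ⟨m', hm'eq⟩ := factor_through_surjective g hg p' (by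
        intro z hz
        have : z ∈ LinearMap.range f := hexact ▸ hz
        obtain ⟨x, rfl⟩ := this
        exact hp'f x)
      have : p' p = m' (g p) := (congrArg (fun u => u p) hm'eq).symm
      rw [evalDD_apply, this, hm' m']
    -- dmap f is surjective
    have hds : Function.Surjective (dmap f : (P →ₗ[A] A) →ₗ[Aᵐᵒᵖ] (X →ₗ[A] A)) := by
      intro ξ
      obtain ⟨p', hp'⟩ := fstar_surj ξ
      exact ⟨p', hp'⟩
    obtain ⟨ξ, hξ⟩ := factor_through_surjective (dmap f) hds η hker
    obtain ⟨x, hx⟩ := hX.2 ξ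
    -- f x = p
    have hfx : evalDD A P (f x) = evalDD A P p := by
      ext p'
      have h1 : ξ (dmap f p') = η p' := congrArg (fun u => u p') hξ
      have h2 : evalDD A X x (p'.comp f) = ξ (p'.comp f) := congrArg (fun u => u (p'.comp f)) hx
      calc evalDD A P (f x) p' = p' (f x) := rfl
        _ = (p'.comp f) x := rfl
        _ = evalDD A X x (p'.comp f) := rfl
        _ = ξ (dmap f p') := by rw [h2]; rfl
        _ = evalDD A P p p' := by rw [h1]
    have : f x = p := hP.1 hfx
    rw [← this, hgf x]
  · -- M torsionless → X reflexive
    intro hM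
    constructor
    · intro x y h
      apply hf
      apply hP.1
      ext p'
      have := congrArg (fun η => η (p'.comp f)) h
      simpa using this
    · intro ξ
      set η := ξ.comp (dmap f) with hη
      obtain ⟨p, hp⟩ := hP.2 η
      -- g p = 0
      have hgp : g p = 0 := by
        apply hM
        ext m'
        have h1 : evalDD A P p (m'.comp g) = η (m'.comp g) := congrArg (fun u => u (m'.comp g)) hp
        have h2 : (m'.comp g).comp f = 0 := by
          ext x; simp [hgf x]
        calc evalDD A M (g p) m' = (m'.comp g) p := rfl
          _ = η (m'.comp g) := h1
          _ = ξ ((m'.comp g).comp f) := rfl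
          _ = evalDD A M 0 m' := by rw [h2]; simp
      have : p ∈ LinearMap.range f := hexact ▸ hgp
      obtain ⟨x, rfl⟩ := this
      refine ⟨x, ?_⟩
      ext x'
      obtain ⟨p', hp'⟩ := fstar_surj x'
      have h1 : evalDD A P (f x) p' = η p' := congrArg (fun u => u p') hp
      calc evalDD A X x x' = x' x := rfl
        _ = (p'.comp f) x := by rw [hp']
        _ = p' (f x) := rfl
        _ = η p' := h1
        _ = ξ (p'.comp f) := rfl
        _ = ξ x' := by rw [hp']
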